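/- Let G = (V,E) be an undirected graph on {1,...,n}. If the bipartite conflict graph C (with parts V and E and edges the conflicting pairs) has a vertex cover of size k, then there exists a graph G* = (V,E*) with |E △ E*| ≤ 2k such that the identity labeling is a valid DFS numbering of G* (ignoring degree constraints). -/

import Mathlib

open Classical

/-- `adj` is (the adjacency relation of) a simple undirected graph on vertex set `{1,…,n}`. -/
def IsGraphOn (n : ℕ) (adj : ℕ → ℕ → Prop) : Prop :=
  Symmetric adj ∧ ∀ u v, adj u v → 1 ≤ u ∧ u ≤ n ∧ 1 ≤ v ∧ v ≤ n ∧ u ≠ v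

/-- `p(v)`: the largest neighbour of `v` that is smaller than `v`, and `0` if none exists
(`sSup ∅ = 0` in `ℕ`). -/
noncomputable def par (adj : ℕ → ℕ → Prop) (v : ℕ) : ℕ :=
  sSup {u | adj u v ∧ u < v}

/-- `(v, {u,w})` is a conflicting pair: `{u,w}` is an edge and `p(v) < u < v < w`. -/
def Conflict (adj : ℕ → ℕ → Prop) (v u w : ℕ) : Prop :=
  adj u w ∧ par adj v < u ∧ u < v ∧ v < w

/-- One step of a (nondeterministic) depth-first search.  The state consists of the list of
already discovered vertices, in order of discovery and together with the recorded (possibly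
virtual) parent from which each was discovered, and of the stack of active vertices
(the white path, top first). -/
inductive DFSStep (n : ℕ) (adj : ℕ → ℕ → Prop) :
    List (ℕ × ℕ) × List ℕ → List (ℕ × ℕ) × List ℕ → Prop
  | root (v : ℕ) (order : List (ℕ × ℕ)) (hv1 : 1 ≤ v) (hv2 : v ≤ n)
      (hnd : v ∉ order.map Prod.fst) :
      DFSStep n adj (order, []) (order ++ [(v, 0)], [v])
  | descend (v t : ℕ) (order : List (ℕ × ℕ)) (stack : List ℕ)
      (hadj : adj t v) (hnd : v ∉ order.map Prod.fst) :
      DFSStep n adj (order, t :: stack) (order ++ [(v, t)], v :: t :: stack)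
  | backtrack (t : ℕ) (order : List (ℕ × ℕ)) (stack : List ℕ)
      (hall : ∀ u, adj t u → u ∈ order.map Prod.fst) :
      DFSStep n adj (order, t :: stack) (order, stack)

/-- A complete DFS run discovering the vertices in the order given by the list `order`. -/
def DFSRun (n : ℕ) (adj : ℕ → ℕ → Prop) (order : List (ℕ × ℕ)) : Prop :=
  Relation.ReflTransGen (DFSStep n adj) ([], []) (order, [])

/-- The labelling `f` is a valid DFS numbering of the graph: some DFS run discovers the
vertices in the order of increasing labels `1, 2, …, n`. -/
def ValidDFSLabel (n : ℕ) (adj : ℕ → ℕ → Prop) (f : ℕ → ℕ) : Prop :=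
  ∃ order, DFSRun n adj order ∧ (order.map Prod.fst).map f = List.range' 1 n

/-- The identity labelling on `{1,…,n}` is a valid DFS numbering of the graph. -/
def ValidDFS (n : ℕ) (adj : ℕ → ℕ → Prop) : Prop :=
  ValidDFSLabel n adj id

/-- The graph is connected (on its vertex set `{1,…,n}`). -/
def ConnOn (n : ℕ) (adj : ℕ → ℕ → Prop) : Prop :=
  ∀ u v, 1 ≤ u → u ≤ n → 1 ≤ v → v ≤ n → Relation.ReflTransGen adj u v

/-- The degree of a vertex. -/
noncomputable def degree (adj : ℕ → ℕ → Prop) (v : ℕ) : ℕ :=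
  Set.ncard {u | adj u v}

/-- The size `|E △ E'|` of the symmetric difference of the edge sets of two graphs
(given by symmetric adjacency relations). -/
noncomputable def edgeDiff (a b : ℕ → ℕ → Prop) : ℕ :=
  Set.ncard {p : ℕ × ℕ | p.1 < p.2 ∧ ¬(a p.1 p.2 ↔ b p.1 p.2)}

namespace VCF
variable (adj : ℕ → ℕ → Prop)

lemma bddS (v : ℕ) : BddAbove {u | adj u v ∧ u < v} :=
  ⟨v, fun u hu => le_of_lt hu.2⟩

lemma par_lt {v : ℕ} (hv : v ≠ 0) : par adj v < v := by
  rcases Set.eq_empty_or_nonempty {u | adj u v ∧ u < v} with h | h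
  · simp [par, h, Nat.pos_of_ne_zero hv]
  · exact (Nat.sSup_mem h (bddS adj v)).2

lemma par_adj {v : ℕ} (hp : par adj v ≠ 0) : adj (par adj v) v := by
  rcases Set.eq_empty_or_nonempty {u | adj u v ∧ u < v} with h | h
  · exact absurd (by simp [par, h]) hp
  · exact (Nat.sSup_mem h (bddS adj v)).1

lemma le_par {u v : ℕ} (h : adj u v) (huv : u < v) : u ≤ par adj v :=
  le_csSup (bddS adj v) ⟨h, huv⟩

noncomputable def chain (v : ℕ) : List ℕ :=
  if h : v = 0 then [] else v :: chain (par adj v)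
termination_by v
decreasing_by exact par_lt adj h

lemma chain_zero : chain adj 0 = [] := by rw [chain]; simp

lemma chain_pos {v : ℕ} (hv : v ≠ 0) : chain adj v = v :: chain adj (par adj v) := by
  rw [chain]; simp [hv]

lemma mem_chain_le {u v : ℕ} (h : u ∈ chain adj v) : 1 ≤ u ∧ u ≤ v := by
  induction v using Nat.strong_induction_on with
  | _ v ih =>
    rcases eq_or_ne v 0 with rfl | hv
    · simp [chain_zero] at h
    · rw [chain_pos adj hv] at h
      rcases List.mem_cons.1 h with rfl | h
      · exact ⟨Nat.one_le_iff_ne_zero.2 hv, le_refl _⟩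
      · have := ih (par adj v) (par_lt adj hv) h
        exact ⟨this.1, le_of_lt (lt_of_le_of_lt this.2 (par_lt adj hv))⟩

lemma chain_down {u t v : ℕ} (hu : u ∈ chain adj v) (ht : t ∈ chain adj v)
    (hut : u ≤ t) : u ∈ chain adj t := by
  induction v using Nat.strong_induction_on with
  | _ v ih =>
    rcases eq_or_ne v 0 with rfl | hv
    · simp [chain_zero] at hu
    · rw [chain_pos adj hv] at hu ht
      rcases List.mem_cons.1 ht with rfl | ht
      · rw [chain_pos adj hv]; exact hu
      · have htle := (mem_chain_le adj ht).2
        have hplt := par_lt adj hv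
        rcases List.mem_cons.1 hu with rfl | hu
        · omega
        · exact ih (par adj v) hplt hu ht

end VCF

namespace VCF
variable {n : ℕ} {adj : ℕ → ℕ → Prop}

lemma lemA (hG : IsGraphOn n adj) (hc : ∀ v u w, ¬ Conflict adj v u w) :
    ∀ v u, 1 ≤ u → u ≤ v → ∀ w, adj u w → v < w → u ∈ chain adj v := by
  intro v
  induction v with
  | zero => intro u h1 h2; omega
  | succ v ih =>
    intro u h1 h2 w haw hvw
    rcases eq_or_ne u (v+1) with rfl | huv
    · rw [chain_pos adj (by omega)]; exact List.mem_cons_self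
    · have h2' : u ≤ v := by omega
      have hu_chain : u ∈ chain adj v := ih u h1 h2' w haw (by omega)
      have hup : u ≤ par adj (v+1) := by
        by_contra hup
        exact hc (v+1) u w ⟨haw, by omega, by omega, by
          rcases eq_or_ne w (v+1) with rfl | hw
          · exact absurd (le_par adj haw (by omega)) (by omega)
          · have := (hG.2 u w haw).2.2.2.2; omega⟩
      have hpne : par adj (v+1) ≠ 0 := by omega
      have hpv : par adj (v+1) ∈ chain adj v := by
        have hplt : par adj (v+1) < v + 1 := par_lt adj (by omega)
        exact ih _ (by omega) (by omega) (v+1) (par_adj adj hpne) (by omega)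
      rw [chain_pos adj (by omega : v + 1 ≠ 0)]
      exact List.mem_cons_of_mem _ (chain_down adj hu_chain hpv hup)

lemma pops (order : List (ℕ × ℕ)) :
    ∀ x p, (p ∈ chain adj x ∨ p = 0) →
    (∀ t, t ∈ chain adj x → p < t → ∀ u, adj t u → u ∈ order.map Prod.fst) →
    Relation.ReflTransGen (DFSStep n adj) (order, chain adj x) (order, chain adj p) := by
  intro x
  induction x using Nat.strong_induction_on with
  | _ x ih =>
    intro p hpmem H
    rcases eq_or_ne x 0 with rfl | hx
    · rcases hpmem with h | rfl
      · simp [chain_zero] at h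
      · exact Relation.ReflTransGen.refl
    · rcases eq_or_ne p x with rfl | hpx
      · exact Relation.ReflTransGen.refl
      · have hplt : p < x := by
          rcases hpmem with h | rfl
          · rw [chain_pos adj hx] at h
            rcases List.mem_cons.1 h with rfl | h
            · omega
            · have := (mem_chain_le adj h).2
              have := par_lt adj hx
              omega
          · omega
        have hstep : DFSStep n adj (order, chain adj x) (order, chain adj (par adj x)) := by
          rw [chain_pos adj hx]
          exact DFSStep.backtrack x order _
            (fun u hu => H x (by rw [chain_pos adj hx]; exact List.mem_cons_self) hplt u hu)
        refine Relation.ReflTransGen.head hstep (ih (par adj x) (par_lt adj hx) p ?_ ?_)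
        · rcases hpmem with h | rfl
          · rw [chain_pos adj hx] at h
            rcases List.mem_cons.1 h with rfl | h
            · omega
            · exact Or.inl h
          · exact Or.inr rfl
        · intro t ht hpt u hu
          exact H t (by rw [chain_pos adj hx]; exact List.mem_cons_of_mem _ ht) hpt u hu

lemma runs (hG : IsGraphOn n adj) (hc : ∀ v u w, ¬ Conflict adj v u w) :
    ∀ v, v ≤ n → Relation.ReflTransGen (DFSStep n adj) ([], [])
      ((List.range' 1 v).map (fun i => (i, par adj i)), chain adj v) := by
  intro v
  induction v with
  | zero => intro _; rw [chain_zero]; exact Relation.ReflTransGen.refl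
  | succ v ih =>
    intro hvn
    set ordv := (List.range' 1 v).map (fun i => (i, par adj i)) with hordv
    have hfst : ordv.map Prod.fst = List.range' 1 v := by
      simp [hordv, List.map_map, Function.comp_def]
    have hnd : (v+1) ∉ ordv.map Prod.fst := by
      rw [hfst]; simp [List.mem_range'_1]; omega
    have hpmem : par adj (v+1) ∈ chain adj v ∨ par adj (v+1) = 0 := by
      rcases eq_or_ne (par adj (v+1)) 0 with h | hpne
      · exact Or.inr h
      · have hplt : par adj (v+1) < v+1 := par_lt adj (by omega)
        exact Or.inl (lemA hG hc v _ (by omega) (by omega) (v+1) (par_adj adj hpne) (by omega))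
    have hH : ∀ t, t ∈ chain adj v → par adj (v+1) < t → ∀ u, adj t u →
        u ∈ ordv.map Prod.fst := by
      intro t ht hpt u hu
      have htv := mem_chain_le adj ht
      have hu1 := (hG.2 t u hu).2.2.1
      rw [hfst]
      rw [List.mem_range'_1]
      refine ⟨by omega, ?_⟩
      by_contra hle
      push_neg at hle
      rcases eq_or_ne u (v+1) with rfl | hune
      · exact absurd (le_par adj hu (by omega)) (by omega)
      · exact hc (v+1) t u ⟨hu, by omega, by omega, by omega⟩
    have hrun1 := ih (by omega)
    have hrun2 := pops (n := n) ordv v (par adj (v+1)) hpmem hH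
    have hr : List.range' 1 (v+1) = List.range' 1 v ++ [v+1] := by
      rw [List.range'_1_concat]
      simp [Nat.add_comm]
    have hord : (List.range' 1 (v+1)).map (fun i => (i, par adj i))
        = ordv ++ [(v+1, par adj (v+1))] := by
      rw [hr]; simp [hordv]
    have hstep : DFSStep n adj (ordv, chain adj (par adj (v+1)))
        (ordv ++ [(v+1, par adj (v+1))], chain adj (v+1)) := by
      rcases eq_or_ne (par adj (v+1)) 0 with hp0 | hpne
      · rw [hp0, chain_zero, chain_pos adj (by omega : v+1 ≠ 0), hp0, chain_zero]
        exact DFSStep.root (v+1) ordv (by omega) (by omega) hnd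
      · rw [chain_pos adj hpne, chain_pos adj (by omega : v+1 ≠ 0), chain_pos adj hpne]
        exact DFSStep.descend (v+1) (par adj (v+1)) ordv _ (par_adj adj hpne) hnd
    rw [hord]
    exact (hrun1.trans hrun2).tail hstep

lemma noconf_valid (hG : IsGraphOn n adj) (hc : ∀ v u w, ¬ Conflict adj v u w) :
    ValidDFS n adj := by
  refine ⟨(List.range' 1 n).map (fun i => (i, par adj i)), ?_, ?_⟩
  · refine (runs hG hc n le_rfl).trans ?_
    have h2 : Relation.ReflTransGen (DFSStep n adj)
        ((List.range' 1 n).map (fun i => (i, par adj i)), chain adj n)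
        ((List.range' 1 n).map (fun i => (i, par adj i)), chain adj 0) :=
      pops ((List.range' 1 n).map (fun i => (i, par adj i))) n 0 (Or.inr rfl)
        (fun t ht _ u hu => by
          have := hG.2 t u hu
          simp only [List.map_map, Function.comp_def]
          rw [show ((fun i => Prod.fst (i, par adj i)) : ℕ → ℕ) = fun i => i from rfl]
          rw [List.map_id', List.mem_range'_1]
          omega)
    rw [chain_zero] at h2
    exact h2
  · simp [List.map_map, Function.comp_def]

end VCF

namespace VCF

lemma par_eq_pred {adj : ℕ → ℕ → Prop} {v : ℕ} (h : adj (v-1) v) (hv : 2 ≤ v) :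
    par adj v = v - 1 := by
  apply le_antisymm
  · exact csSup_le ⟨v-1, h, by omega⟩ (fun u hu => by have := hu.2; omega)
  · exact le_csSup (bddS adj v) ⟨h, by omega⟩

lemma par_mono {adj adj' : ℕ → ℕ → Prop} {v : ℕ}
    (h : ∀ u, adj u v → u < v → adj' u v) : par adj v ≤ par adj' v := by
  rcases Set.eq_empty_or_nonempty {u | adj u v ∧ u < v} with he | hne
  · simp [par, he]
  · exact csSup_le_csSup (bddS adj' v) hne (fun u hu => ⟨h u hu.1 hu.2, hu.2⟩)

end VCF

/-- If the bipartite conflict graph of `G` has a vertex cover of size `k`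
(vertices `SV ⊆ V` and edges `SE ⊆ E` such that every conflicting pair uses a vertex of `SV`
or an edge of `SE`), then there is a graph `G*` on `{1,…,n}` with `|E △ E*| ≤ 2k` whose
identity labelling is a valid DFS numbering (degree constraints are ignored). -/
theorem vertex_cover_fix (n k : ℕ) (adj : ℕ → ℕ → Prop) (hG : IsGraphOn n adj)
    (SV : Set ℕ) (SE : Set (ℕ × ℕ)) (hSV : SV.Finite) (hSE : SE.Finite)
    (hsize : SV.ncard + SE.ncard ≤ k)
    (hcover : ∀ v u w, Conflict adj v u w → v ∈ SV ∨ (u, w) ∈ SE) :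
    ∃ adj' : ℕ → ℕ → Prop, IsGraphOn n adj' ∧ edgeDiff adj adj' ≤ 2 * k ∧
      ValidDFS n adj' := by
  classical
  set SV' : Set ℕ := {v | v ∈ SV ∧ 2 ≤ v ∧ v ≤ n} with hSV'
  set Rem : Set (ℕ × ℕ) := {q | q ∈ SE ∧ adj q.1 q.2 ∧ q.1 < q.2} with hRem
  set Add : Set (ℕ × ℕ) :=
    (fun v => (v-1, v)) '' SV' ∪ (fun q : ℕ × ℕ => (q.2 - 1, q.2)) '' Rem with hAdd
  have hRemLT : ∀ a b, (a, b) ∈ Rem → a < b := fun a b hq => hq.2.2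
  have hAddShape : ∀ a b, (a, b) ∈ Add → a = b - 1 ∧ 2 ≤ b ∧ b ≤ n := by
    rintro a b (⟨v, hv, heq⟩ | ⟨e, he, heq⟩)
    · cases heq; exact ⟨rfl, hv.2.1, hv.2.2⟩
    · cases heq
      have h1 := hG.2 e.1 e.2 he.2.1
      have h2 := he.2.2
      refine ⟨rfl, by omega, by omega⟩
  set adj' : ℕ → ℕ → Prop := fun a b =>
    (adj a b ∧ (a,b) ∉ Rem ∧ (b,a) ∉ Rem) ∨ (a,b) ∈ Add ∨ (b,a) ∈ Add with hadj'
  have hG' : IsGraphOn n adj' := by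
    constructor
    · intro a b hab
      rcases hab with ⟨h1, h2, h3⟩ | h | h
      · exact Or.inl ⟨hG.1 h1, h3, h2⟩
      · exact Or.inr (Or.inr h)
      · exact Or.inr (Or.inl h)
    · intro a b hab
      rcases hab with ⟨h1, _, _⟩ | h | h
      · exact hG.2 a b h1
      · obtain ⟨e1, e2, e3⟩ := hAddShape a b h; omega
      · obtain ⟨e1, e2, e3⟩ := hAddShape b a h; omega
  have hRemFin : Rem.Finite := hSE.subset (fun q hq => hq.1)
  have hSV'Fin : SV'.Finite := hSV.subset (fun v hv => hv.1)
  have hAddFin : Add.Finite := (hSV'Fin.image _).union (hRemFin.image _)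
  have hdiff : edgeDiff adj adj' ≤ 2 * k := by
    have hsub : {p : ℕ × ℕ | p.1 < p.2 ∧ ¬(adj p.1 p.2 ↔ adj' p.1 p.2)} ⊆ Rem ∪ Add := by
      rintro ⟨a, b⟩ ⟨hab, hne⟩
      by_cases h : adj a b
      · by_cases hr : (a, b) ∈ Rem
        · exact Or.inl hr
        · by_cases hr2 : (b, a) ∈ Rem
          · exact absurd (hRemLT b a hr2) (by omega)
          · exact absurd ⟨fun _ => Or.inl ⟨h, hr, hr2⟩, fun _ => h⟩ hne
      · have ha' : adj' a b := by
          by_contra h'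
          exact hne ⟨fun hh => absurd hh h, fun hh => absurd hh h'⟩
        rcases ha' with ⟨h1, _⟩ | hr | hr
        · exact absurd h1 h
        · exact Or.inr hr
        · obtain ⟨e1, e2, e3⟩ := hAddShape b a hr; omega
    have hR : Rem.ncard ≤ SE.ncard :=
      Set.ncard_le_ncard (show Rem ⊆ SE from fun q hq => hq.1) hSE
    have hA : Add.ncard ≤ SV.ncard + SE.ncard := by
      have h1 : ((fun v => (v-1, v)) '' SV').ncard ≤ SV.ncard :=
        le_trans (Set.ncard_image_le hSV'Fin)
          (Set.ncard_le_ncard (show SV' ⊆ SV from fun v hv => hv.1) hSV)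
      have h2 : ((fun q : ℕ × ℕ => (q.2 - 1, q.2)) '' Rem).ncard ≤ SE.ncard :=
        le_trans (Set.ncard_image_le hRemFin) hR
      exact le_trans (Set.ncard_union_le _ _) (Nat.add_le_add h1 h2)
    have h0 : edgeDiff adj adj' ≤ (Rem ∪ Add).ncard :=
      Set.ncard_le_ncard hsub (hRemFin.union hAddFin)
    have h1 : (Rem ∪ Add).ncard ≤ Rem.ncard + Add.ncard := Set.ncard_union_le _ _
    omega
  refine ⟨adj', hG', hdiff, VCF.noconf_valid hG' ?_⟩
  rintro v u w ⟨huw, hpu, huv, hvw⟩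
  have hu1 : 1 ≤ u := (hG'.2 u w huw).1
  have hwn : w ≤ n := (hG'.2 u w huw).2.2.2.1
  have hv2 : 2 ≤ v := by omega
  have hvn : v ≤ n := by omega
  have hedge : adj u w ∧ (u, w) ∉ Rem := by
    rcases huw with ⟨h1, h2, _⟩ | hr | hr
    · exact ⟨h1, h2⟩
    · obtain ⟨e1, e2, e3⟩ := hAddShape u w hr; omega
    · obtain ⟨e1, e2, e3⟩ := hAddShape w u hr; omega
  have hfix : (v-1, v) ∉ Add := by
    intro hmem
    have h1 : adj' (v-1) v := Or.inr (Or.inl hmem)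
    have h2 := VCF.par_eq_pred h1 hv2
    omega
  have hvSV : v ∉ SV := fun hvS => hfix (Or.inl ⟨v, ⟨hvS, hv2, hvn⟩, rfl⟩)
  have hnorem : ∀ a, (a, v) ∉ Rem := fun a ha => hfix (Or.inr ⟨(a, v), ha, rfl⟩)
  have hmono : par adj v ≤ par adj' v := by
    apply VCF.par_mono
    intro a hav halt
    exact Or.inl ⟨hav, hnorem a, fun hh => absurd (hRemLT v a hh) (by omega)⟩
  have hconf : Conflict adj v u w := ⟨hedge.1, by omega, huv, hvw⟩
  rcases hcover v u w hconf with h | h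
  · exact hvSV h
  · exact hedge.2 ⟨h, hedge.1, by omega⟩
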